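/- Suppose the range condition holds. Then for all t > t_* every minimizer u_t of E_t^{α,β}(·;f) satisfies ‖Au_t − f‖_H ≤ t^{1/α} J_min^{β/α}. If moreover the source condition holds and α > 1, then ‖Au_t − f‖_H ≤ t^{1/(α−1)} s_*^{1/(α−1)} J_min^{(β−1)/(α−1)}. -/

import Mathlib

open Filter Topology Set
open scoped ENNReal RealInnerProductSpace

noncomputable section

/-- The variational energy `E_t^{α,β}(u; f)`. -/
def En {X : Type*} [NormedAddCommGroup X] [NormedSpace ℝ X]
    {H : Type*} [NormedAddCommGroup H] [InnerProductSpace ℝ H]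
    (A : X →L[ℝ] H) (J : X → ℝ≥0∞) (f : H) (t α β : ℝ) (u : X) : ℝ≥0∞ :=
  ENNReal.ofReal ((1 / α) * ‖A u - f‖ ^ α) + ENNReal.ofReal (t / β) * J u ^ β

/-- `u` is a minimizer of `E_t^{α,β}(·; f)`. -/
def IsMinimizer {X : Type*} [NormedAddCommGroup X] [NormedSpace ℝ X]
    {H : Type*} [NormedAddCommGroup H] [InnerProductSpace ℝ H]
    (A : X →L[ℝ] H) (J : X → ℝ≥0∞) (f : H) (t α β : ℝ) (u : X) : Prop :=
  ∀ v, En A J f t α β u ≤ En A J f t α β v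

/-- `J` is proper. -/
def IsProperFn {X : Type*} (J : X → ℝ≥0∞) : Prop := ∃ u, J u ≠ ⊤

/-- `J` is absolutely one-homogeneous. -/
def AbsOneHom {X : Type*} [NormedAddCommGroup X] [NormedSpace ℝ X] (J : X → ℝ≥0∞) : Prop :=
  ∀ (c : ℝ) (u : X), J (c • u) = ENNReal.ofReal |c| * J u

/-- `J` is convex. -/
def EConvexFn {X : Type*} [NormedAddCommGroup X] [NormedSpace ℝ X] (J : X → ℝ≥0∞) : Prop :=
  ∀ (u v : X) (a b : ℝ), 0 ≤ a → 0 ≤ b → a + b = 1 →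
    J (a • u + b • v) ≤ ENNReal.ofReal a * J u + ENNReal.ofReal b * J v

/-- The subdifferential of `J` at `u`; dual elements are represented as `X →L[ℝ] ℝ`. -/
def subdiff {X : Type*} [NormedAddCommGroup X] [NormedSpace ℝ X]
    (J : X → ℝ≥0∞) (u : X) : Set (X →L[ℝ] ℝ) :=
  {p | ∀ v, (J u : EReal) + ((p (v - u) : ℝ) : EReal) ≤ (J v : EReal)}

/-- The adjoint `A* q` as an element of the dual of `X`. -/
def Astar {X : Type*} [NormedAddCommGroup X] [NormedSpace ℝ X]
    {H : Type*} [NormedAddCommGroup H] [InnerProductSpace ℝ H]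
    (A : X →L[ℝ] H) (q : H) : X →L[ℝ] ℝ :=
  (innerSL ℝ q).comp A

/-- The set of norms `‖q‖` of source elements `q` for solutions of `Au = f`. -/
def SourceNorms {X : Type*} [NormedAddCommGroup X] [NormedSpace ℝ X]
    {H : Type*} [NormedAddCommGroup H] [InnerProductSpace ℝ H]
    (A : X →L[ℝ] H) (J : X → ℝ≥0∞) (f : H) : Set ℝ :=
  {r | ∃ (u : X) (q : H), J u ≠ ⊤ ∧ A u = f ∧ Astar A q ∈ subdiff J u ∧ r = ‖q‖}

/-- The weak-star topology on the dual `Y →L[ℝ] ℝ` of `Y`. -/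
def weakStar (Y : Type*) [NormedAddCommGroup Y] [NormedSpace ℝ Y] :
    TopologicalSpace (Y →L[ℝ] ℝ) :=
  TopologicalSpace.induced (fun (u : Y →L[ℝ] ℝ) (y : Y) => u y) inferInstance

/-- `J` is lower semicontinuous with respect to the weak-star topology. -/
def WeakStarLSC {Y : Type*} [NormedAddCommGroup Y] [NormedSpace ℝ Y]
    (J : (Y →L[ℝ] ℝ) → ℝ≥0∞) : Prop :=
  @LowerSemicontinuous _ _ (weakStar Y) _ J

/-- `A` is weak-star-to-weak continuous. -/
def WeakStarToWeakCont {Y : Type*} [NormedAddCommGroup Y] [NormedSpace ℝ Y]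
    {H : Type*} [NormedAddCommGroup H] [InnerProductSpace ℝ H]
    (A : (Y →L[ℝ] ℝ) →L[ℝ] H) : Prop :=
  ∀ h : H, @Continuous _ _ (weakStar Y) _ (fun u => (⟪A u, h⟫ : ℝ))

/-- Assumption 1: `‖A ·‖` is a norm on `N(J)` equivalent to the restriction of `‖·‖`. -/
def ANormEquiv {X : Type*} [NormedAddCommGroup X] [NormedSpace ℝ X]
    {H : Type*} [NormedAddCommGroup H] [InnerProductSpace ℝ H]
    (A : X →L[ℝ] H) (J : X → ℝ≥0∞) : Prop :=
  ∃ c > (0:ℝ), ∃ C > (0:ℝ), ∀ u, J u = 0 → c * ‖u‖ ≤ ‖A u‖ ∧ ‖A u‖ ≤ C * ‖u‖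

/-- `PA` is the `A`-orthogonal projection onto `N(J)`. -/
def IsAProj {X : Type*} [NormedAddCommGroup X] [NormedSpace ℝ X]
    {H : Type*} [NormedAddCommGroup H] [InnerProductSpace ℝ H]
    (A : X →L[ℝ] H) (J : X → ℝ≥0∞) (PA : H → X) : Prop :=
  ∀ g : H, J (PA g) = 0 ∧ (∀ u, J u = 0 → ‖A (PA g) - g‖ ≤ ‖A u - g‖) ∧
    (∀ u, J u = 0 → ‖A u - g‖ ≤ ‖A (PA g) - g‖ → u = PA g)

/-- Assumption 2: generalized Poincaré inequality. -/
def PoincareIneq {X : Type*} [NormedAddCommGroup X] [NormedSpace ℝ X]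
    {H : Type*} [NormedAddCommGroup H] [InnerProductSpace ℝ H]
    (A : X →L[ℝ] H) (J : X → ℝ≥0∞) (PA : H → X) : Prop :=
  ∃ C > (0:ℝ), ∀ u, ENNReal.ofReal ‖u - PA (A u)‖ ≤ ENNReal.ofReal C * J u

section AuxLemmas

variable {Y : Type*} [NormedAddCommGroup Y] [NormedSpace ℝ Y]
  {H : Type*} [NormedAddCommGroup H] [InnerProductSpace ℝ H]

lemma J_ne_top_of_min (A : (Y →L[ℝ] ℝ) →L[ℝ] H) (J : (Y →L[ℝ] ℝ) → ℝ≥0∞) (f : H)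
    (α β : ℝ) (hβ : 1 ≤ β) (udag : Y →L[ℝ] ℝ) (hRC1 : J udag ≠ ⊤)
    (t : ℝ) (ht : 0 < t) (u : Y →L[ℝ] ℝ) (hu : IsMinimizer A J f t α β u) :
    J u ≠ ⊤ := by
  intro htop
  have hβ0 : (0:ℝ) < β := by linarith
  have hne : En A J f t α β udag ≠ ⊤ := by
    unfold En
    refine ENNReal.add_ne_top.2 ⟨ENNReal.ofReal_ne_top,
      ENNReal.mul_ne_top ENNReal.ofReal_ne_top ?_⟩
    exact ENNReal.rpow_ne_top_of_nonneg hβ0.le hRC1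
  have htb : (0:ℝ) < t / β := div_pos ht hβ0
  have htop' : En A J f t α β u = ⊤ := by
    unfold En
    rw [htop, ENNReal.top_rpow_of_pos hβ0, ENNReal.mul_top
      (by simpa [ENNReal.ofReal_eq_zero] using not_le.2 htb)]
    exact add_top _
  exact hne (top_le_iff.1 (htop' ▸ hu udag))

lemma key_ineq (A : (Y →L[ℝ] ℝ) →L[ℝ] H) (J : (Y →L[ℝ] ℝ) → ℝ≥0∞) (f : H)
    (hconv : EConvexFn J)
    (α β : ℝ) (hα : 1 ≤ α) (hβ : 1 ≤ β)
    (udag : Y →L[ℝ] ℝ) (hRC1 : J udag ≠ ⊤) (hRC2 : A udag = f)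
    (Jmin : ℝ) (hJminpos : 0 < Jmin) (hJmin : J udag = ENNReal.ofReal Jmin)
    (t : ℝ) (ht : 0 < t) (u : Y →L[ℝ] ℝ) (hu : IsMinimizer A J f t α β u) :
    ‖A u - f‖ ^ α ≤ t * (J u).toReal ^ (β - 1) * (Jmin - (J u).toReal) := by
  have hα0 : (0:ℝ) < α := by linarith
  have hβ0 : (0:ℝ) < β := by linarith
  have hJu : J u ≠ ⊤ := J_ne_top_of_min A J f α β hβ udag hRC1 t ht u hu
  set R := ‖A u - f‖ with hRdef
  have hR0 : (0:ℝ) ≤ R := norm_nonneg _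
  set Jt := (J u).toReal with hJtdef
  have hJt0 : (0:ℝ) ≤ Jt := ENNReal.toReal_nonneg
  have hJu' : J u = ENNReal.ofReal Jt := (ENNReal.ofReal_toReal hJu).symm
  set F : ℝ → ℝ := fun s => (1/α) * ((1-s) ^ α * R ^ α) + (t/β) * ((1-s)*Jt + s*Jmin) ^ β
    with hFdef
  have hF0 : F 0 = (1/α) * R ^ α + (t/β) * Jt ^ β := by
    simp [hFdef, Real.one_rpow]
  -- the comparison inequality along the segment
  have hstar : ∀ s ∈ Ioc (0:ℝ) 1, F 0 ≤ F s := by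
    intro s hs
    obtain ⟨hs0, hs1⟩ := hs
    have h1s : (0:ℝ) ≤ 1 - s := by linarith
    have hl0 : (0:ℝ) ≤ (1-s)*Jt + s*Jmin :=
      add_nonneg (mul_nonneg h1s hJt0) (mul_nonneg hs0.le hJminpos.le)
    have hAv : A ((1-s) • u + s • udag) - f = (1-s) • (A u - f) := by
      rw [map_add, map_smul, map_smul, hRC2, smul_sub]
      module
    have hnorm : ‖A ((1-s) • u + s • udag) - f‖ = (1-s) * R := by
      rw [hAv, norm_smul, Real.norm_eq_abs, abs_of_nonneg h1s]
    have hJv : J ((1-s) • u + s • udag) ≤ ENNReal.ofReal ((1-s)*Jt + s*Jmin) := by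
      calc J ((1-s) • u + s • udag)
          ≤ ENNReal.ofReal (1-s) * J u + ENNReal.ofReal s * J udag :=
            hconv u udag (1-s) s h1s hs0.le (by ring)
        _ = ENNReal.ofReal ((1-s)*Jt + s*Jmin) := by
            rw [hJu', hJmin, ← ENNReal.ofReal_mul h1s, ← ENNReal.ofReal_mul hs0.le,
              ← ENNReal.ofReal_add (mul_nonneg h1s hJt0) (mul_nonneg hs0.le hJminpos.le)]
    have hEnu : En A J f t α β u = ENNReal.ofReal (F 0) := by
      unfold En
      rw [hJu', ENNReal.ofReal_rpow_of_nonneg hJt0 hβ0.le,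
        ← ENNReal.ofReal_mul (by positivity),
        ← ENNReal.ofReal_add (by positivity) (mul_nonneg (by positivity)
          (Real.rpow_nonneg hJt0 β)), hF0]
    have hEnv : En A J f t α β ((1-s) • u + s • udag) ≤ ENNReal.ofReal (F s) := by
      unfold En
      rw [hnorm]
      have h2 : (J ((1-s) • u + s • udag)) ^ β
          ≤ ENNReal.ofReal (((1-s)*Jt + s*Jmin) ^ β) := by
        rw [← ENNReal.ofReal_rpow_of_nonneg hl0 hβ0.le]
        exact ENNReal.rpow_le_rpow hJv hβ0.le
      calc ENNReal.ofReal (1/α * ((1-s)*R) ^ α) + ENNReal.ofReal (t/β)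
            * (J ((1-s) • u + s • udag)) ^ β
          ≤ ENNReal.ofReal (1/α * ((1-s)*R) ^ α) + ENNReal.ofReal (t/β)
            * ENNReal.ofReal (((1-s)*Jt + s*Jmin) ^ β) :=
            add_le_add le_rfl (mul_le_mul_right h2 _)
        _ = ENNReal.ofReal (F s) := by
            rw [← ENNReal.ofReal_mul (by positivity),
              ← ENNReal.ofReal_add (by positivity) (mul_nonneg (by positivity)
                (Real.rpow_nonneg hl0 β))]
            congr 1
            rw [hFdef]
            simp only
            rw [Real.mul_rpow h1s hR0]
    have hle : ENNReal.ofReal (F 0) ≤ ENNReal.ofReal (F s) := by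
      rw [← hEnu]
      exact (hu _).trans hEnv
    have hFs0 : 0 ≤ F s :=
      add_nonneg (mul_nonneg (by positivity)
          (mul_nonneg (Real.rpow_nonneg h1s α) (Real.rpow_nonneg hR0 α)))
        (mul_nonneg (by positivity) (Real.rpow_nonneg hl0 β))
    exact (ENNReal.ofReal_le_ofReal_iff hFs0).1 hle
  -- derivative of F at 0
  have h1 : HasDerivAt (fun s : ℝ => 1 - s) (0 - 1) 0 :=
    (hasDerivAt_const (0:ℝ) (1:ℝ)).sub (hasDerivAt_id 0)
  have h1' : HasDerivAt (fun s : ℝ => (1-s) ^ α) (-α) 0 := by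
    have hg : HasDerivAt (fun x : ℝ => x ^ α) (α * (1:ℝ) ^ (α-1)) ((fun s : ℝ => 1 - s) 0) := by
      have : ((fun s : ℝ => 1 - s) 0) = (1:ℝ) := by norm_num
      rw [this]
      exact Real.hasDerivAt_rpow_const (Or.inl one_ne_zero)
    have := hg.comp 0 h1
    simpa [Function.comp_def, Real.one_rpow] using this
  have h2 : HasDerivAt (fun s : ℝ => (1-s)*Jt + s*Jmin) ((0-1)*Jt + 1*Jmin) 0 :=
    (h1.mul_const Jt).add ((hasDerivAt_id 0).mul_const Jmin)
  have h2' : HasDerivAt (fun s : ℝ => ((1-s)*Jt + s*Jmin) ^ β)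
      (β * Jt ^ (β-1) * ((0-1)*Jt + 1*Jmin)) 0 := by
    have hg : HasDerivAt (fun x : ℝ => x ^ β) (β * Jt ^ (β-1))
        ((fun s : ℝ => (1-s)*Jt + s*Jmin) 0) := by
      have : ((fun s : ℝ => (1-s)*Jt + s*Jmin) 0) = Jt := by norm_num
      rw [this]
      exact Real.hasDerivAt_rpow_const (Or.inr hβ)
    have := hg.comp 0 h2
    simpa [Function.comp_def] using this
  have hFd : HasDerivAt F ((1/α) * (-α * R ^ α)
      + (t/β) * (β * Jt ^ (β-1) * ((0-1)*Jt + 1*Jmin))) 0 :=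
    ((h1'.mul_const (R ^ α)).const_mul (1/α)).add (h2'.const_mul (t/β))
  -- right derivative is nonnegative
  have hd0 : 0 ≤ (1/α) * (-α * R ^ α) + (t/β) * (β * Jt ^ (β-1) * ((0-1)*Jt + 1*Jmin)) := by
    have hslope := hasDerivAt_iff_tendsto_slope.mp hFd
    have hsub : Ioi (0:ℝ) ⊆ {(0:ℝ)}ᶜ := fun x hx => by
      simp only [Set.mem_compl_iff, Set.mem_singleton_iff]
      exact ne_of_gt hx
    have hslope' := hslope.mono_left (nhdsWithin_mono _ hsub)
    refine ge_of_tendsto hslope' ?_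
    filter_upwards [Ioc_mem_nhdsGT (by norm_num : (0:ℝ) < 1)] with s hs
    have h := hstar s hs
    have hs0 : (0:ℝ) < s := hs.1
    have : slope F 0 s = s⁻¹ * (F s - F 0) := by
      simp [slope, sub_zero, smul_eq_mul, vsub_eq_sub]
    rw [this]
    exact mul_nonneg (inv_nonneg.2 hs0.le) (by linarith)
  have e1 : (1/α) * (-α * R ^ α) = -(R ^ α) := by
    field_simp
  have e2 : (t/β) * (β * Jt ^ (β-1) * ((0-1)*Jt + 1*Jmin)) = t * Jt ^ (β-1) * (Jmin - Jt) := by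
    field_simp
    ring
  rw [e1, e2] at hd0
  linarith

lemma first_bound (A : (Y →L[ℝ] ℝ) →L[ℝ] H) (J : (Y →L[ℝ] ℝ) → ℝ≥0∞) (f : H)
    (hconv : EConvexFn J)
    (α β : ℝ) (hα : 1 ≤ α) (hβ : 1 ≤ β)
    (udag : Y →L[ℝ] ℝ) (hRC1 : J udag ≠ ⊤) (hRC2 : A udag = f)
    (Jmin : ℝ) (hJminpos : 0 < Jmin) (hJmin : J udag = ENNReal.ofReal Jmin)
    (t : ℝ) (ht : 0 < t) (u : Y →L[ℝ] ℝ) (hu : IsMinimizer A J f t α β u) :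
    ‖A u - f‖ ≤ t ^ (1/α) * Jmin ^ (β/α) := by
  have hα0 : (0:ℝ) < α := by linarith
  have hkey := key_ineq A J f hconv α β hα hβ udag hRC1 hRC2 Jmin hJminpos hJmin t ht u hu
  set R := ‖A u - f‖ with hRdef
  have hR0 : (0:ℝ) ≤ R := norm_nonneg _
  set Jt := (J u).toReal with hJtdef
  have hJt0 : (0:ℝ) ≤ Jt := ENNReal.toReal_nonneg
  have hcore : R ^ α ≤ t * Jmin ^ β := by
    rcases le_or_gt Jt Jmin with h | h
    · have hmono : Jt ^ (β-1) ≤ Jmin ^ (β-1) :=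
        Real.rpow_le_rpow hJt0 h (by linarith)
      have hprod : Jmin ^ (β-1) * Jmin = Jmin ^ β := by
        rw [← Real.rpow_add_one hJminpos.ne' (β-1)]
        norm_num
      have h1 : Jt ^ (β-1) * (Jmin - Jt) ≤ Jmin ^ (β-1) * Jmin := by
        have hb1 : 0 ≤ Jt ^ (β-1) := Real.rpow_nonneg hJt0 _
        have hb2 : 0 ≤ Jmin ^ (β-1) := Real.rpow_nonneg hJminpos.le _
        nlinarith
      calc R ^ α ≤ t * Jt ^ (β-1) * (Jmin - Jt) := hkey
        _ = t * (Jt ^ (β-1) * (Jmin - Jt)) := by ring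
        _ ≤ t * (Jmin ^ (β-1) * Jmin) := by
            exact mul_le_mul_of_nonneg_left h1 ht.le
        _ = t * Jmin ^ β := by rw [hprod]
    · have hb1 : 0 ≤ Jt ^ (β-1) := Real.rpow_nonneg hJt0 _
      have hneg : t * Jt ^ (β-1) * (Jmin - Jt) ≤ 0 :=
        mul_nonpos_of_nonneg_of_nonpos (mul_nonneg ht.le hb1) (by linarith)
      have hpos : 0 ≤ t * Jmin ^ β :=
        mul_nonneg ht.le (Real.rpow_nonneg hJminpos.le _)
      linarith
  have hRid : R = (R ^ α) ^ (1/α) := by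
    rw [← Real.rpow_mul hR0, mul_one_div_cancel hα0.ne', Real.rpow_one]
  calc R = (R ^ α) ^ (1/α) := hRid
    _ ≤ (t * Jmin ^ β) ^ (1/α) :=
      Real.rpow_le_rpow (Real.rpow_nonneg hR0 α) hcore (by positivity)
    _ = t ^ (1/α) * Jmin ^ (β/α) := by
      rw [Real.mul_rpow ht.le (Real.rpow_nonneg hJminpos.le β),
        ← Real.rpow_mul hJminpos.le, mul_one_div]

lemma source_lower (A : (Y →L[ℝ] ℝ) →L[ℝ] H) (J : (Y →L[ℝ] ℝ) → ℝ≥0∞) (f : H)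
    (udag : Y →L[ℝ] ℝ) (hRC2 : A udag = f)
    (hJminimizing : ∀ w, A w = f → J udag ≤ J w)
    (Jmin : ℝ) (hJminpos : 0 < Jmin) (hJmin : J udag = ENNReal.ofReal Jmin)
    (u : Y →L[ℝ] ℝ) (hJu : J u ≠ ⊤)
    (r : ℝ) (hr : r ∈ SourceNorms A J f) :
    Jmin - (J u).toReal ≤ r * ‖A u - f‖ := by
  obtain ⟨u', q, hJu', hAu', hsub, rfl⟩ := hr
  -- J u' = ofReal Jmin
  have hA0 : A (udag - u') = 0 := by rw [map_sub, hRC2, hAu', sub_self]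
  have happ : ∀ v, (Astar A q) v = ⟪q, A v⟫ := fun v => rfl
  have hval0 : ((Astar A q) (udag - u') : ℝ) = 0 := by
    rw [happ, hA0, inner_zero_right]
  have h1 := hsub udag
  rw [hval0] at h1
  have hle1 : J u' ≤ J udag := by
    rw [← EReal.coe_ennreal_le_coe_ennreal_iff]
    simpa using h1
  have hJu'eq : J u' = ENNReal.ofReal Jmin :=
    le_antisymm (hJmin ▸ hle1) (hJmin ▸ hJminimizing u' hAu')
  -- main inequality at u
  have h2 := hsub u
  have hA2 : A (u - u') = A u - f := by rw [map_sub, hAu']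
  have hval2 : ((Astar A q) (u - u') : ℝ) = ⟪q, A u - f⟫ := by rw [happ, hA2]
  rw [hval2, hJu'eq] at h2
  have hcoe1 : ((ENNReal.ofReal Jmin : ℝ≥0∞) : EReal) = (Jmin : EReal) := by
    rw [EReal.coe_ennreal_ofReal, max_eq_left hJminpos.le]
  have hcoe2 : ((J u : ℝ≥0∞) : EReal) = (((J u).toReal : ℝ) : EReal) := by
    conv_lhs => rw [← ENNReal.ofReal_toReal hJu]
    rw [EReal.coe_ennreal_ofReal, max_eq_left ENNReal.toReal_nonneg]
  rw [hcoe1, hcoe2, ← EReal.coe_add, EReal.coe_le_coe_iff] at h2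
  have habs : |(inner ℝ q (A u - f) : ℝ)| ≤ ‖q‖ * ‖A u - f‖ := abs_real_inner_le_norm q _
  have h3 := (abs_le.1 habs).1
  linarith

lemma third_bound (A : (Y →L[ℝ] ℝ) →L[ℝ] H) (J : (Y →L[ℝ] ℝ) → ℝ≥0∞) (f : H)
    (hconv : EConvexFn J)
    (α β : ℝ) (hα : 1 < α) (hβ : 1 ≤ β)
    (udag : Y →L[ℝ] ℝ) (hRC1 : J udag ≠ ⊤) (hRC2 : A udag = f)
    (hJminimizing : ∀ w, A w = f → J udag ≤ J w)
    (Jmin : ℝ) (hJminpos : 0 < Jmin) (hJmin : J udag = ENNReal.ofReal Jmin)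
    (hS : (SourceNorms A J f).Nonempty)
    (t : ℝ) (ht : 0 < t) (u : Y →L[ℝ] ℝ) (hu : IsMinimizer A J f t α β u) :
    ‖A u - f‖ ≤ t ^ (1/(α-1)) * sInf (SourceNorms A J f) ^ (1/(α-1))
      * Jmin ^ ((β-1)/(α-1)) := by
  have hα1 : (0:ℝ) < α - 1 := by linarith
  have hJu : J u ≠ ⊤ := J_ne_top_of_min A J f α β hβ udag hRC1 t ht u hu
  have hkey := key_ineq A J f hconv α β hα.le hβ udag hRC1 hRC2 Jmin hJminpos hJmin t ht u hu
  set R := ‖A u - f‖ with hRdef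
  have hR0 : (0:ℝ) ≤ R := norm_nonneg _
  set Jt := (J u).toReal with hJtdef
  have hJt0 : (0:ℝ) ≤ Jt := ENNReal.toReal_nonneg
  set sstar := sInf (SourceNorms A J f) with hsdef
  have hs0 : 0 ≤ sstar := Real.sInf_nonneg (by
    rintro x ⟨u', q, -, -, -, rfl⟩
    exact norm_nonneg q)
  have hRHS0 : 0 ≤ t ^ (1/(α-1)) * sstar ^ (1/(α-1)) * Jmin ^ ((β-1)/(α-1)) :=
    mul_nonneg (mul_nonneg (Real.rpow_nonneg ht.le _) (Real.rpow_nonneg hs0 _))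
      (Real.rpow_nonneg hJminpos.le _)
  rcases eq_or_lt_of_le hR0 with hR | hR
  · rw [← hR]; exact hRHS0
  -- R > 0
  have hJle : Jt ≤ Jmin := by
    by_contra hlt
    push_neg at hlt
    have hb1 : 0 < Jt ^ (β-1) := Real.rpow_pos_of_pos (lt_trans hJminpos hlt) _
    have : t * Jt ^ (β-1) * (Jmin - Jt) < 0 :=
      mul_neg_of_pos_of_neg (mul_pos ht hb1) (by linarith)
    have hRα : 0 < R ^ α := Real.rpow_pos_of_pos hR α
    linarith
  have hD : 0 < t * Jmin ^ (β-1) := mul_pos ht (Real.rpow_pos_of_pos hJminpos _)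
  -- R^(α-1) ≤ t * Jmin^(β-1) * r for all r ∈ SourceNorms
  have hmain : ∀ r ∈ SourceNorms A J f, R ^ (α-1) ≤ t * Jmin ^ (β-1) * r := by
    intro r hr
    have hlow := source_lower A J f udag hRC2 hJminimizing Jmin hJminpos hJmin u hJu r hr
    have hr0 : 0 ≤ r := by
      obtain ⟨u', q, -, -, -, rfl⟩ := hr
      exact norm_nonneg q
    have hmono : Jt ^ (β-1) ≤ Jmin ^ (β-1) := Real.rpow_le_rpow hJt0 hJle (by linarith)
    have hb1 : 0 ≤ Jt ^ (β-1) := Real.rpow_nonneg hJt0 _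
    have hb2 : 0 ≤ Jmin ^ (β-1) := Real.rpow_nonneg hJminpos.le _
    have hstep : R ^ α ≤ t * Jmin ^ (β-1) * (r * R) := by
      have h1 : Jt ^ (β-1) * (Jmin - Jt) ≤ Jmin ^ (β-1) * (r * R) := by
        rcases le_or_gt 0 (Jmin - Jt) with hnn | hneg
        · calc Jt ^ (β-1) * (Jmin - Jt) ≤ Jmin ^ (β-1) * (Jmin - Jt) :=
              mul_le_mul_of_nonneg_right hmono hnn
            _ ≤ Jmin ^ (β-1) * (r * R) := mul_le_mul_of_nonneg_left hlow hb2
        · have : Jt ^ (β-1) * (Jmin - Jt) ≤ 0 := mul_nonpos_of_nonneg_of_nonpos hb1 hneg.le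
          have h2 : 0 ≤ Jmin ^ (β-1) * (r * R) :=
            mul_nonneg hb2 (mul_nonneg hr0 hR0)
          linarith
      calc R ^ α ≤ t * Jt ^ (β-1) * (Jmin - Jt) := hkey
        _ = t * (Jt ^ (β-1) * (Jmin - Jt)) := by ring
        _ ≤ t * (Jmin ^ (β-1) * (r * R)) := mul_le_mul_of_nonneg_left h1 ht.le
        _ = t * Jmin ^ (β-1) * (r * R) := by ring
    have hRα : R ^ α = R ^ (α-1) * R := by
      rw [← Real.rpow_add_one (ne_of_gt hR) (α-1)]
      norm_num
    rw [hRα] at hstep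
    have := (mul_le_mul_iff_of_pos_right hR).1 (by linarith [hstep] : R ^ (α-1) * R ≤ (t * Jmin ^ (β-1) * r) * R)
    linarith
  -- pass to the infimum
  have hinf : R ^ (α-1) ≤ t * Jmin ^ (β-1) * sstar := by
    have hc : R ^ (α-1) / (t * Jmin ^ (β-1)) ≤ sstar := by
      refine le_csInf hS ?_
      intro r hr
      rw [div_le_iff₀ hD]
      have := hmain r hr
      linarith
    rw [div_le_iff₀ hD] at hc
    linarith
  have hRid : R = (R ^ (α-1)) ^ (1/(α-1)) := by
    rw [← Real.rpow_mul hR0, mul_one_div_cancel hα1.ne', Real.rpow_one]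
  calc R = (R ^ (α-1)) ^ (1/(α-1)) := hRid
    _ ≤ (t * Jmin ^ (β-1) * sstar) ^ (1/(α-1)) :=
      Real.rpow_le_rpow (Real.rpow_nonneg hR0 _) hinf (by positivity)
    _ = t ^ (1/(α-1)) * sstar ^ (1/(α-1)) * Jmin ^ ((β-1)/(α-1)) := by
      rw [Real.mul_rpow (mul_nonneg ht.le (Real.rpow_nonneg hJminpos.le _)) hs0,
        Real.mul_rpow ht.le (Real.rpow_nonneg hJminpos.le _),
        ← Real.rpow_mul hJminpos.le, mul_one_div]
      ring

end AuxLemmas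

/-- Residual bounds, Lemma 3.2.
Suppose the range condition holds, with `J_min` the value of `J` at a `J`-minimizing
solution `u†`. Then for all `t > t_*` (where `t_* = J_min^{1−β}/s_*` if `α = 1` and the
source condition holds, and `t_* = 0` otherwise) every minimizer `u_t` of
`E_t^{α,β}(·;f)` satisfies `‖Au_t − f‖ ≤ t^{1/α} J_min^{β/α}`. If moreover the source
condition holds and `α > 1`, then
`‖Au_t − f‖ ≤ t^{1/(α−1)} s_*^{1/(α−1)} J_min^{(β−1)/(α−1)}`. -/
theorem residual_bounds
    {Y : Type*} [NormedAddCommGroup Y] [NormedSpace ℝ Y]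
    {H : Type*} [NormedAddCommGroup H] [InnerProductSpace ℝ H]
    (A : (Y →L[ℝ] ℝ) →L[ℝ] H) (J : (Y →L[ℝ] ℝ) → ℝ≥0∞) (f : H)
    (hproper : IsProperFn J) (hconv : EConvexFn J) (hlsc : WeakStarLSC J) (hhom : AbsOneHom J)
    (hdata : ∀ w, A w = f → J w ≠ 0)
    (α β : ℝ) (hα : 1 ≤ α) (hβ : 1 ≤ β)
    (udag : Y →L[ℝ] ℝ) (hRC1 : J udag ≠ ⊤) (hRC2 : A udag = f)
    (hJminimizing : ∀ w, A w = f → J udag ≤ J w)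
    (Jmin : ℝ) (hJminpos : 0 < Jmin) (hJmin : J udag = ENNReal.ofReal Jmin) :
    ((α = 1 ∧ (SourceNorms A J f).Nonempty) →
      ∀ t : ℝ, Jmin ^ ((1:ℝ) - β) / sInf (SourceNorms A J f) < t →
        ∀ u, IsMinimizer A J f t α β u →
          ‖A u - f‖ ≤ t ^ (1 / α) * Jmin ^ (β / α)) ∧
    (¬(α = 1 ∧ (SourceNorms A J f).Nonempty) →
      ∀ t : ℝ, 0 < t → ∀ u, IsMinimizer A J f t α β u →
        ‖A u - f‖ ≤ t ^ (1 / α) * Jmin ^ (β / α)) ∧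
    ((SourceNorms A J f).Nonempty → 1 < α →
      ∀ t : ℝ, 0 < t → ∀ u, IsMinimizer A J f t α β u →
        ‖A u - f‖ ≤ t ^ (1 / (α - 1)) * sInf (SourceNorms A J f) ^ (1 / (α - 1)) *
          Jmin ^ ((β - 1) / (α - 1))) := by
  refine ⟨?_, ?_, ?_⟩
  · rintro ⟨hα1, hS⟩ t htgt u hu
    have hs0 : 0 ≤ sInf (SourceNorms A J f) := Real.sInf_nonneg (by
      rintro x ⟨u', q, -, -, -, rfl⟩
      exact norm_nonneg q)
    have ht : 0 < t := by
      have h1 : 0 ≤ Jmin ^ ((1:ℝ) - β) / sInf (SourceNorms A J f) :=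
        div_nonneg (Real.rpow_nonneg hJminpos.le _) hs0
      linarith
    exact first_bound A J f hconv α β hα hβ udag hRC1 hRC2 Jmin hJminpos hJmin t ht u hu
  · rintro - t ht u hu
    exact first_bound A J f hconv α β hα hβ udag hRC1 hRC2 Jmin hJminpos hJmin t ht u hu
  · rintro hS hα1 t ht u hu
    exact third_bound A J f hconv α β hα1 hβ udag hRC1 hRC2 hJminimizing Jmin hJminpos hJmin
      hS t ht u hu


end
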